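/- Let w ∈ S_n be an involution different from the longest element w₀. Then at least one of the following holds: (i) there exists an involution w' with w < w' in the Bruhat order, inv(w') = inv(w) + 1, and ℓ_θ(w') = ℓ_θ(w) + 1; or (ii) there exist an involution w' and an element s ∈ S_n with w < s < w' in the Bruhat order, inv(w') = inv(s) + 1 = inv(w) + 2, and ℓ_θ(w') = ℓ_θ(w) + 1. -/

import Mathlib

/-- Number of inversions of a permutation of `Fin n`: pairs `i < j` with `w i > w j`. -/
def invNum {n : ℕ} (w : Equiv.Perm (Fin n)) : ℕ :=
  (Finset.univ.filter fun p : Fin n × Fin n => p.1 < p.2 ∧ w p.2 < w p.1).card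

/-- Number of excedances of a permutation of `Fin n`: indices `i` with `w i > i`. -/
def excNum {n : ℕ} (w : Equiv.Perm (Fin n)) : ℕ :=
  (Finset.univ.filter fun i : Fin n => i < w i).card

/-- The θ-length of an involution: `(inv w + exc w) / 2`. -/
def thetaLength {n : ℕ} (w : Equiv.Perm (Fin n)) : ℕ := (invNum w + excNum w) / 2

/-- The Bruhat order on `S_n`, via the rank-matrix characterization:
`u ≤ v` iff for all `i, j`, `#{a ≤ i : u a ≥ j} ≤ #{a ≤ i : v a ≥ j}`. -/
def bruhatLE {n : ℕ} (u v : Equiv.Perm (Fin n)) : Prop :=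
  ∀ i j : Fin n,
    (Finset.univ.filter fun a : Fin n => a ≤ i ∧ j ≤ u a).card ≤
    (Finset.univ.filter fun a : Fin n => a ≤ i ∧ j ≤ v a).card

/-- Strict Bruhat order. -/
def bruhatLT {n : ℕ} (u v : Equiv.Perm (Fin n)) : Prop := bruhatLE u v ∧ u ≠ v

open Equiv Finset

section Aux

variable {n : ℕ}

lemma swap_lt_swap {c d i j : Fin n} (hcd : c < d) (adj : ∀ x : Fin n, x ≤ c ∨ d ≤ x)
    (hij : i < j) (hne : ¬(i = c ∧ j = d)) : Equiv.swap c d i < Equiv.swap c d j := by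
  have ai := adj i; have aj := adj j
  simp only [Equiv.swap_apply_def]
  split_ifs with h1 h2 h3 h4 h5 h6 h7 h8 <;>
    simp only [Fin.lt_def, Fin.le_def, Fin.ext_iff, not_and] at * <;> omega

lemma invNum_inv (u : Equiv.Perm (Fin n)) : invNum u⁻¹ = invNum u := by
  unfold invNum
  refine Finset.card_bij' (fun p _ => (u⁻¹ p.2, u⁻¹ p.1)) (fun p _ => (u p.2, u p.1)) ?_ ?_ ?_ ?_ <;>
    simp only [Finset.mem_filter, Finset.mem_univ, true_and, Equiv.Perm.inv_def, Equiv.apply_symm_apply,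
      Equiv.symm_apply_apply, and_imp, Prod.forall]
  · intro a b h1 h2; exact ⟨h2, h1⟩
  · intro a b h1 h2; exact ⟨h2, h1⟩
  · intro a b _ _; simp
  · intro a b _ _; simp

lemma invNum_mul_swap {u : Equiv.Perm (Fin n)} {c d : Fin n} (hcd : c < d)
    (adj : ∀ x : Fin n, x ≤ c ∨ d ≤ x) (h : u c < u d) :
    invNum (u * Equiv.swap c d) = invNum u + 1 := by
  classical
  set τ := Equiv.swap c d with hτ
  have key : (Finset.univ.filter fun p : Fin n × Fin n => p.1 < p.2 ∧ (u * τ) p.2 < (u * τ) p.1)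
      = insert (c, d) ((Finset.univ.filter fun p : Fin n × Fin n => p.1 < p.2 ∧ u p.2 < u p.1).image
          fun p => (τ p.1, τ p.2)) := by
    ext ⟨i, j⟩
    simp only [Finset.mem_insert, Finset.mem_image, Finset.mem_filter, Finset.mem_univ, true_and]
    simp only [Equiv.Perm.mul_apply, Prod.mk.injEq, Prod.exists]
    constructor
    · rintro ⟨hij, hinv⟩
      by_cases hcase : i = c ∧ j = d
      · exact Or.inl hcase
      · exact Or.inr ⟨τ i, τ j, ⟨swap_lt_swap hcd adj hij hcase, by
          simpa [hτ, Equiv.swap_apply_self] using hinv⟩, by simp [hτ, Equiv.swap_apply_self],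
          by simp [hτ, Equiv.swap_apply_self]⟩
    · rintro (⟨rfl, rfl⟩ | ⟨a, b, ⟨hab, hba⟩, hai, hbj⟩)
      · exact ⟨hcd, by simpa [hτ] using h⟩
      · subst hai; subst hbj
        refine ⟨swap_lt_swap hcd adj hab ?_, by simpa [hτ, Equiv.swap_apply_self] using hba⟩
        rintro ⟨rfl, rfl⟩
        exact absurd h (not_lt.2 hba.le)
  have hinj : Function.Injective fun p : Fin n × Fin n => (τ p.1, τ p.2) := by
    intro p q hpq
    simp only [Prod.mk.injEq] at hpq
    exact Prod.ext (τ.injective hpq.1) (τ.injective hpq.2)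
  have hnotmem : (c, d) ∉ (Finset.univ.filter fun p : Fin n × Fin n =>
      p.1 < p.2 ∧ u p.2 < u p.1).image fun p => (τ p.1, τ p.2) := by
    simp only [Finset.mem_image, Finset.mem_filter, Finset.mem_univ, true_and, Prod.mk.injEq,
      Prod.exists, not_exists, not_and]
    intro a b hab heq
    intro hbd
    have ha : a = d := by
      have := congrArg τ heq; rwa [Equiv.swap_apply_self, Equiv.swap_apply_left] at this
    have hb : b = c := by
      have := congrArg τ hbd; rwa [Equiv.swap_apply_self, Equiv.swap_apply_right] at this
    subst ha; subst hb
    exact absurd (lt_trans hab.1 hcd) (lt_irrefl _)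
  rw [invNum, key, Finset.card_insert_of_notMem hnotmem, Finset.card_image_of_injective _ hinj]
  rfl

lemma excNum_case1 {w : Equiv.Perm (Fin n)} {c d : Fin n} (hcd : c < d)
    (hc : w c = c) (hd : w d = d) : excNum (w * Equiv.swap c d) = excNum w + 1 := by
  classical
  unfold excNum
  have key : (Finset.univ.filter fun i : Fin n => i < (w * Equiv.swap c d) i)
      = insert c (Finset.univ.filter fun i : Fin n => i < w i) := by
    ext x
    simp only [Finset.mem_insert, Finset.mem_filter, Finset.mem_univ, true_and]
    simp only [Equiv.Perm.mul_apply]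
    rcases eq_or_ne x c with rfl | hxc
    · simp [Equiv.swap_apply_left, hd, hcd]
    rcases eq_or_ne x d with rfl | hxd
    · rw [Equiv.swap_apply_right, hc, hd]
      simp only [lt_self_iff_false, or_false]
      exact ⟨fun h => absurd h (not_lt.2 hcd.le), fun h => absurd h hxc⟩
    · rw [Equiv.swap_apply_of_ne_of_ne hxc hxd]
      simp [hxc]
  rw [key, Finset.card_insert_of_notMem (by simp [hc])]

lemma excNum_conj {w : Equiv.Perm (Fin n)} {c d : Fin n} (hcd : c < d)
    (adj : ∀ x : Fin n, x ≤ c ∨ d ≤ x) (hwc : w c ≠ d) (hwd : w d ≠ c) :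
    excNum (Equiv.swap c d * w * Equiv.swap c d) = excNum w := by
  classical
  unfold excNum
  set τ := Equiv.swap c d with hτ
  refine Finset.card_bij' (fun a _ => τ a) (fun a _ => τ a) ?_ ?_ ?_ ?_ <;>
    simp only [Finset.mem_filter, Finset.mem_univ, true_and]
  · simp only [Equiv.Perm.mul_apply]
    intro a ha
    rcases lt_trichotomy (τ a) (w (τ a)) with h | h | h
    · exact h
    · exfalso; rw [← h, Equiv.swap_apply_self] at ha; exact lt_irrefl _ ha
    · exfalso
      have h2 := swap_lt_swap hcd adj h (by rintro ⟨h1, h2⟩; rw [h2] at h1; exact hwd h1)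
      rw [Equiv.swap_apply_self] at h2
      exact absurd (lt_trans ha h2) (lt_irrefl _)
  · simp only [Equiv.Perm.mul_apply]
    intro a ha
    -- ha : a < w a ; goal : τ a < τ (w (τ (τ a)))
    rw [Equiv.swap_apply_self]
    exact swap_lt_swap hcd adj ha (by rintro ⟨rfl, h2⟩; exact hwc h2)
  · intro a _; rw [Equiv.swap_apply_self]
  · intro a _; rw [Equiv.swap_apply_self]

lemma card_inter_pair {α : Type*} [DecidableEq α] (U : Finset α) (x y : α) (hxy : x ≠ y) :
    (U ∩ {x, y}).card = (if x ∈ U then 1 else 0) + (if y ∈ U then 1 else 0) := by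
  rw [Finset.inter_comm, ← Finset.filter_mem_eq_inter]
  by_cases hx : x ∈ U <;> by_cases hy : y ∈ U <;>
    simp [Finset.filter_insert, Finset.filter_singleton, hx, hy, hxy]

lemma core_card_le {α : Type*} [DecidableEq α] (S T : Finset α) (x y : α) (hxy : x ≠ y)
    (hout : ∀ a, a ≠ x → a ≠ y → (a ∈ S ↔ a ∈ T))
    (A A' B C : Prop) [Decidable A] [Decidable A'] [Decidable B] [Decidable C]
    (hsx : x ∈ S ↔ A ∧ B) (hsy : y ∈ S ↔ A' ∧ C) (htx : x ∈ T ↔ A ∧ C) (hty : y ∈ T ↔ A' ∧ B)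
    (hBC : B → C) (hA : A' → A) : S.card ≤ T.card := by
  have hS : S.card = (S ∩ {x, y}).card + (S \ {x, y}).card :=
    (Finset.card_inter_add_card_sdiff S {x, y}).symm
  have hT : T.card = (T ∩ {x, y}).card + (T \ {x, y}).card :=
    (Finset.card_inter_add_card_sdiff T {x, y}).symm
  have hdiff : S \ {x, y} = T \ {x, y} := by
    ext a
    simp only [Finset.mem_sdiff, Finset.mem_insert, Finset.mem_singleton, not_or]
    constructor
    · rintro ⟨h1, h2, h3⟩; exact ⟨(hout a h2 h3).1 h1, h2, h3⟩
    · rintro ⟨h1, h2, h3⟩; exact ⟨(hout a h2 h3).2 h1, h2, h3⟩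
  rw [hS, hT, hdiff]
  have h1 := card_inter_pair S x y hxy
  have h2 := card_inter_pair T x y hxy
  rw [h1, h2]
  simp only [hsx, hsy, htx, hty]
  by_cases hA' : A' <;> by_cases hAh : A <;> by_cases hB : B <;> by_cases hC : C <;>
    simp_all

lemma bruhat_step_right {u : Equiv.Perm (Fin n)} {c d : Fin n} (hcd : c < d)
    (h : u c < u d) : bruhatLE u (u * Equiv.swap c d) := by
  intro i j
  refine core_card_le _ _ c d hcd.ne ?_ (c ≤ i) (d ≤ i) (j ≤ u c) (j ≤ u d) ?_ ?_ ?_ ?_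
    (fun hb => le_trans hb h.le) (fun ha => le_trans hcd.le ha)
  · intro a hac had
    simp only [Finset.mem_filter, Finset.mem_univ, true_and]
    simp only [Equiv.Perm.mul_apply, Equiv.swap_apply_of_ne_of_ne hac had]
  · simp [Finset.mem_filter]
  · simp [Finset.mem_filter]
  · simp only [Finset.mem_filter, Finset.mem_univ, true_and]; simp [Equiv.swap_apply_left]
  · simp only [Finset.mem_filter, Finset.mem_univ, true_and]; simp [Equiv.swap_apply_right]

lemma bruhat_step_left {u : Equiv.Perm (Fin n)} {c d : Fin n} (hcd : c < d)
    (h : u⁻¹ c < u⁻¹ d) : bruhatLE u (Equiv.swap c d * u) := by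
  intro i j
  refine core_card_le _ _ (u⁻¹ c) (u⁻¹ d) (by simp [hcd.ne]) ?_
    (u⁻¹ c ≤ i) (u⁻¹ d ≤ i) (j ≤ c) (j ≤ d) ?_ ?_ ?_ ?_
    (fun hb => le_trans hb hcd.le) (fun ha => le_trans h.le ha)
  · intro a hac had
    have h1 : u a ≠ c := fun hh => hac (by rw [← hh, Equiv.Perm.inv_def, Equiv.symm_apply_apply])
    have h2 : u a ≠ d := fun hh => had (by rw [← hh, Equiv.Perm.inv_def, Equiv.symm_apply_apply])
    simp only [Finset.mem_filter, Finset.mem_univ, true_and]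
    simp only [Equiv.Perm.mul_apply, Equiv.swap_apply_of_ne_of_ne h1 h2]
  · simp [Finset.mem_filter]
  · simp [Finset.mem_filter]
  · simp only [Finset.mem_filter, Finset.mem_univ, true_and]; simp [Equiv.swap_apply_left]
  · simp only [Finset.mem_filter, Finset.mem_univ, true_and]; simp [Equiv.swap_apply_right]

lemma strictMono_le_apply {f : Fin n → Fin n} (hf : StrictMono f) : ∀ p, p ≤ f p := by
  have key : ∀ m (p : Fin n), p.val ≤ m → p ≤ f p := by
    intro m
    induction m with
    | zero =>
      intro p hp
      have h0 : p.val = 0 := Nat.le_zero.mp hp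
      rw [Fin.le_def, ]
      omega
    | succ m ih =>
      intro p hp
      rcases Nat.lt_or_ge p.val (m + 1) with hlt | hge
      · exact ih p (by omega)
      · have hpv : p.val = m + 1 := by omega
        have hm : m < n := by omega
        have h1 : (⟨m, hm⟩ : Fin n) < p := by
          rw [Fin.lt_def]; simp only [Fin.val_mk]; omega
        have h2 := ih ⟨m, hm⟩ (le_refl m)
        have h3 := hf h1
        rw [Fin.le_def] at h2 ⊢
        rw [Fin.lt_def] at h3
        simp only [Fin.val_mk] at h2 h3
        omega
  exact fun p => key p.val p (le_refl _)

lemma exists_adj_ascent (w : Equiv.Perm (Fin n)) (hne : w ≠ (Fin.revPerm : Equiv.Perm (Fin n))) :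
    ∃ c d : Fin n, c < d ∧ (∀ x : Fin n, x ≤ c ∨ d ≤ x) ∧ w c < w d := by
  by_contra hcon
  push_neg at hcon
  apply hne
  have adjdesc : ∀ k (hk : k + 1 < n), w ⟨k + 1, hk⟩ < w ⟨k, by omega⟩ := by
    intro k hk
    have h1 : (⟨k, by omega⟩ : Fin n) < ⟨k + 1, hk⟩ := by
      rw [Fin.lt_def]; simp only [Fin.val_mk]; omega
    have h2 : ∀ x : Fin n, x ≤ ⟨k, by omega⟩ ∨ (⟨k + 1, hk⟩ : Fin n) ≤ x := by
      intro x; rw [Fin.le_def, Fin.le_def]; simp only [Fin.val_mk]; omega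
    have h3 := hcon _ _ h1 h2
    refine lt_of_le_of_ne h3 (fun hh => ?_)
    have := w.injective hh
    rw [Fin.ext_iff] at this
    omega
  set g : Equiv.Perm (Fin n) := w.trans Fin.revPerm with hg
  have gadj : ∀ k (hk : k + 1 < n), g ⟨k, by omega⟩ < g ⟨k + 1, hk⟩ := by
    intro k hk
    simp only [hg, Equiv.trans_apply, Fin.revPerm_apply]
    exact Fin.rev_lt_rev.mpr (adjdesc k hk)
  have gmono : StrictMono g := by
    have key : ∀ m (p q : Fin n), q.val = p.val + (m + 1) → g p < g q := by
      intro m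
      induction m with
      | zero =>
        intro p q hq
        have hk : p.val + 1 < n := by omega
        have := gadj p.val hk
        have hp' : (⟨p.val, by omega⟩ : Fin n) = p := Fin.ext rfl
        have hq' : (⟨p.val + 1, hk⟩ : Fin n) = q := Fin.ext (by simp only [Fin.val_mk]; omega)
        rwa [hp', hq'] at this
      | succ m ih =>
        intro p q hq
        have hr : p.val + (m + 1) < n := by omega
        have h1 := ih p ⟨p.val + (m + 1), hr⟩ rfl
        have hk : p.val + (m + 1) + 1 < n := by omega
        have h2 := gadj (p.val + (m + 1)) hk
        have hq' : (⟨p.val + (m + 1) + 1, hk⟩ : Fin n) = q :=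
          Fin.ext (by simp only [Fin.val_mk]; omega)
        rw [hq'] at h2
        exact lt_trans h1 h2
    intro p q hpq
    rw [Fin.lt_def] at hpq
    exact key (q.val - p.val - 1) p q (by omega)
  have ginvmono : StrictMono ⇑g⁻¹ := by
    intro a b hab
    rcases lt_trichotomy (g⁻¹ a) (g⁻¹ b) with h | h | h
    · exact h
    · exfalso
      have := congrArg g h
      simp only [Equiv.Perm.inv_def, Equiv.apply_symm_apply] at this
      exact absurd this (ne_of_lt hab)
    · exfalso
      have := gmono h
      simp only [Equiv.Perm.inv_def, Equiv.apply_symm_apply] at this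
      exact absurd (lt_trans hab this) (lt_irrefl _)
  have gid : ∀ p, g p = p := by
    intro p
    refine le_antisymm ?_ (strictMono_le_apply gmono p)
    have h1 := strictMono_le_apply ginvmono p
    have := gmono.monotone h1
    rwa [Equiv.Perm.inv_def, Equiv.apply_symm_apply] at this
  ext x
  have := gid x
  simp only [hg, Equiv.trans_apply, Fin.revPerm_apply] at this
  have h2 := congrArg Fin.rev this
  rw [Fin.rev_rev] at h2
  rw [h2, Fin.revPerm_apply]

end Aux

/-- Corollary 6.6: every involution `w` of `S_n` different from the longest element `w₀`
admits an involution `w'` strictly above it in Bruhat order with either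
`inv w' = inv w + 1` (case (i)) or, via an intermediate element `s`,
`inv w' = inv s + 1 = inv w + 2` (case (ii)); in both cases `ℓ_θ(w') = ℓ_θ(w) + 1`. -/
theorem involution_ascent {n : ℕ} (w : Equiv.Perm (Fin n)) (hw : w * w = 1)
    (hne : w ≠ (Fin.revPerm : Equiv.Perm (Fin n))) :
    (∃ w' : Equiv.Perm (Fin n), w' * w' = 1 ∧ bruhatLT w w' ∧
      invNum w' = invNum w + 1 ∧ thetaLength w' = thetaLength w + 1) ∨
    (∃ w' s : Equiv.Perm (Fin n), w' * w' = 1 ∧ bruhatLT w s ∧ bruhatLT s w' ∧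
      invNum w' = invNum s + 1 ∧ invNum w' = invNum w + 2 ∧
      thetaLength w' = thetaLength w + 1) := by
  obtain ⟨c, d, hcd, adj, hasc⟩ := exists_adj_ascent w hne
  have hwinv : w⁻¹ = w := inv_eq_of_mul_eq_one_right hw
  set τ := Equiv.swap c d with hτ
  have hττ : τ * τ = 1 := Equiv.swap_mul_self c d
  by_cases hA : w c = c ∧ w d = d
  · -- Case (i)
    obtain ⟨hc, hd⟩ := hA
    left
    refine ⟨w * τ, ?_, ⟨bruhat_step_right hcd hasc, ?_⟩, invNum_mul_swap hcd adj hasc, ?_⟩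
    · -- involution
      have hcom : w * τ = τ * w := by
        ext x
        simp only [Equiv.Perm.mul_apply]
        rcases eq_or_ne x c with rfl | hxc
        · rw [hτ, Equiv.swap_apply_left, hd, hc, Equiv.swap_apply_left]
        rcases eq_or_ne x d with rfl | hxd
        · rw [hτ, Equiv.swap_apply_right, hc, hd, Equiv.swap_apply_right]
        · have h1 : w x ≠ c := fun hh => hxc (w.injective (by rw [hh, hc]))
          have h2 : w x ≠ d := fun hh => hxd (w.injective (by rw [hh, hd]))
          rw [hτ, Equiv.swap_apply_of_ne_of_ne hxc hxd, Equiv.swap_apply_of_ne_of_ne h1 h2]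
      calc w * τ * (w * τ) = w * (τ * w) * τ := by rw [mul_assoc, mul_assoc, mul_assoc]
        _ = w * (w * τ) * τ := by rw [hcom]
        _ = w * w * (τ * τ) := by rw [mul_assoc, mul_assoc, mul_assoc]
        _ = 1 := by rw [hw, hττ, one_mul]
    · -- w ≠ w * τ
      intro hh
      have := invNum_mul_swap hcd adj hasc
      rw [← hh] at this
      omega
    · -- theta
      have he := excNum_case1 hcd hc hd
      have hi := invNum_mul_swap hcd adj hasc
      unfold thetaLength
      rw [he, hi]
      omega
  · -- Case (ii)
    right
    have hwc : w c ≠ d := by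
      intro hh
      have : w d = c := by
        have := congrArg w hh
        rw [← Equiv.Perm.mul_apply, hw, Equiv.Perm.one_apply] at this
        exact this.symm
      rw [hh, this] at hasc
      exact absurd (lt_trans hasc hcd) (lt_irrefl _)
    have hwd : w d ≠ c := by
      intro hh
      have : w c = d := by
        have := congrArg w hh
        rw [← Equiv.Perm.mul_apply, hw, Equiv.Perm.one_apply] at this
        exact this.symm
      rw [hh, this] at hasc
      exact absurd (lt_trans hcd hasc) (lt_irrefl _)
    set s : Equiv.Perm (Fin n) := τ * w with hs
    have hinvs : invNum s = invNum w + 1 := by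
      have h1 : s⁻¹ = w * τ := by
        rw [hs, mul_inv_rev, hwinv, hτ, Equiv.swap_inv]
      calc invNum s = invNum s⁻¹ := (invNum_inv s).symm
        _ = invNum (w * τ) := by rw [h1]
        _ = invNum w + 1 := invNum_mul_swap hcd adj hasc
    have hscd : s c < s d := by
      rw [hs]
      simp only [Equiv.Perm.mul_apply]
      exact swap_lt_swap hcd adj hasc hA
    have hinvw' : invNum (s * τ) = invNum s + 1 := invNum_mul_swap hcd adj hscd
    have hw'eq : s * τ = τ * w * τ := by rw [hs]
    refine ⟨s * τ, s, ?_, ⟨?_, ?_⟩, ⟨bruhat_step_right hcd hscd, ?_⟩, hinvw', by omega, ?_⟩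
    · -- involution of τ * w * τ
      rw [hw'eq]
      calc τ * w * τ * (τ * w * τ) = τ * w * (τ * τ) * (w * τ) := by
            simp only [mul_assoc]
        _ = τ * (w * w) * τ := by rw [hττ]; simp only [mul_assoc, one_mul]
        _ = 1 := by rw [hw]; simp only [mul_one, one_mul]; exact hττ
    · -- bruhatLE w s
      rw [hs]
      exact bruhat_step_left hcd (by rw [hwinv]; exact hasc)
    · -- w ≠ s
      intro hh; rw [← hh] at hinvs; omega
    · -- s ≠ s * τ
      intro hh; rw [← hh] at hinvw'; omega
    · -- theta
      have he : excNum (s * τ) = excNum w := by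
        rw [hw'eq]
        exact excNum_conj hcd adj hwc hwd
      unfold thetaLength
      rw [he, hinvw', hinvs]
      omega
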